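/- For every k ≥ 1, if x_1,...,x_k are chosen independently and uniformly at random from the 16 vertices of the Clebsch graph L, the probability that {x_1,...,x_k} induces no edge of L equals (5·5^{k-1} + 10·4^{k-1} − 30·3^{k-1} + 20·2^{k-1} − 4)/16^{k-1}. -/

import Mathlib

/-- Vertices of the Clebsch graph: binary 5-sequences with an even number of ones. -/
abbrev ClebschVert : Type := {v : Fin 5 → ZMod 2 // ∑ i, v i = 0}

/-- The Clebsch graph: two vertices are adjacent iff their termwise mod-2 sum has weight 4,
i.e. they differ in exactly four coordinates. -/
def Clebsch : SimpleGraph ClebschVert where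
  Adj x y := hammingDist x.1 y.1 = 4
  symm := ⟨fun x y h => by simpa [hammingDist_comm] using h⟩
  loopless := ⟨fun x h => by simp [hammingDist_self] at h⟩

instance : DecidableRel Clebsch.Adj := fun _ _ => Nat.decEq _ _

/-- A concrete vertex of the Clebsch graph. -/
def cv (a b c d e : ZMod 2) (h : a + b + c + d + e = 0 := by decide) : ClebschVert :=
  ⟨![a, b, c, d, e], by simp [Fin.sum_univ_five]; linear_combination h⟩


set_option maxHeartbeats 4000000

namespace ClebschAux

open Finset

open Finset
def tbl : Fin 16 → Nat := ![59520, 54336, 45600, 28944, 36360, 19716, 11010, 5889, 33000, 16596, 8370, 4209, 2190, 1101, 555, 279]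
def adj (a b : Fin 16) : Bool := (tbl a).testBit b.val
def cnt (p : Fin 16 → Bool) : ℕ := (List.finRange 16).countP p

lemma countP_eq_sum_map {α : Type*} (l : List α) (p : α → Bool) :
    l.countP p = (l.map fun v => if p v then 1 else 0).sum := by
  induction l with
  | nil => simp
  | cons a l ih => simp [List.countP_cons, ih]; omega

lemma cnt_eq_card (p : Fin 16 → Bool) :
    (univ.filter fun v => p v = true).card = cnt p := by
  rw [Finset.card_filter, cnt, countP_eq_sum_map, Fin.sum_univ_def]

lemma cnt_eq_card' (P : Fin 16 → Prop) [DecidablePred P] (p : Fin 16 → Bool)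
    (h : ∀ v, P v ↔ p v = true) : (univ.filter P).card = cnt p := by
  rw [show univ.filter P = univ.filter (fun v => p v = true) by
    apply Finset.filter_congr; intro v _; simp [h v]]
  exact cnt_eq_card p

lemma bool_ext {a b : Bool} (h : a = true ↔ b = true) : a = b := by
  cases a <;> cases b <;> simp_all

variable {k : ℕ}
def imgB (x : Fin k → Fin 16) (v : Fin 16) : Bool := decide (∃ i, x i = v)
def cmpB (x : Fin k → Fin 16) (v : Fin 16) : Bool := decide (∀ i, adj (x i) v = false)
def stat (x : Fin k → Fin 16) : ℕ × ℕ := (cnt (imgB x), cnt (cmpB x))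
def indep (x : Fin k → Fin 16) : Prop := ∀ i j, adj (x i) (x j) = false

lemma imgB_iff {x : Fin k → Fin 16} {v} : imgB x v = true ↔ ∃ i, x i = v := by
  simp [imgB]
lemma cmpB_iff {x : Fin k → Fin 16} {v} :
    cmpB x v = true ↔ ∀ s, imgB x s = true → adj s v = false := by
  simp only [cmpB, decide_eq_true_eq, imgB_iff]
  constructor
  · rintro h s ⟨i, rfl⟩; exact h i
  · intro h i; exact h _ ⟨i, rfl⟩

lemma F0 : ∀ a : Fin 16, adj a a = false := by decide
lemma Fsymm : ∀ a b : Fin 16, adj a b = adj b a := by decide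

lemma indep_cons {x : Fin k → Fin 16} {v} :
    indep (Fin.cons v x) ↔ indep x ∧ cmpB x v = true := by
  simp only [indep, Fin.forall_fin_succ, Fin.cons_zero, Fin.cons_succ, cmpB, decide_eq_true_eq]
  constructor
  · rintro ⟨⟨-, h0⟩, h⟩
    exact ⟨fun i j => (h i).2 j, fun i => (h i).1⟩
  · rintro ⟨h, h0⟩
    exact ⟨⟨F0 v, fun j => (Fsymm _ _).trans (h0 j)⟩, fun i => ⟨h0 i, fun j => h i j⟩⟩

lemma imgB_cons {x : Fin k → Fin 16} {v u} :
    imgB (Fin.cons v x) u = ((u == v) || imgB x u) := by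
  apply bool_ext
  simp only [imgB_iff, Fin.exists_fin_succ, Fin.cons_zero, Fin.cons_succ, Bool.or_eq_true,
    beq_iff_eq]
  constructor
  · rintro (rfl | h); exacts [Or.inl rfl, Or.inr h]
  · rintro (rfl | h); exacts [Or.inl rfl, Or.inr h]

lemma cmpB_cons {x : Fin k → Fin 16} {v u} :
    cmpB (Fin.cons v x) u = (!adj v u && cmpB x u) := by
  apply bool_ext
  simp only [cmpB, decide_eq_true_eq, Fin.forall_fin_succ, Fin.cons_zero, Fin.cons_succ,
    Bool.and_eq_true, Bool.not_eq_true']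


lemma cnt_congr {p q : Fin 16 → Bool} (h : ∀ v, p v = q v) : cnt p = cnt q := by
  unfold cnt; congr 1; exact funext h

lemma cmpB_congr {l : ℕ} {x : Fin k → Fin 16} {y : Fin l → Fin 16}
    (h : ∀ s, imgB x s = imgB y s) (u : Fin 16) : cmpB x u = cmpB y u := by
  apply bool_ext
  rw [cmpB_iff, cmpB_iff]
  constructor <;> intro hh s hs
  · exact hh s ((h s).symm ▸ hs)
  · exact hh s (h s ▸ hs)

/-- if `v` is already in the image, consing it changes neither image nor compat predicate. -/
lemma imgB_cons_mem {x : Fin k → Fin 16} {v} (hv : imgB x v = true) (u : Fin 16) :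
    imgB (Fin.cons v x) u = imgB x u := by
  rw [imgB_cons]
  apply bool_ext
  simp only [Bool.or_eq_true, beq_iff_eq]
  constructor
  · rintro (rfl | h); exacts [hv, h]
  · exact Or.inr

lemma cmpB_cons_mem {x : Fin k → Fin 16} {v} (hv : imgB x v = true) (u : Fin 16) :
    cmpB (Fin.cons v x) u = cmpB x u :=
  cmpB_congr (imgB_cons_mem hv) u

lemma stat_cons_mem {x : Fin k → Fin 16} {v} (hv : imgB x v = true) :
    stat (Fin.cons v x) = stat x := by
  unfold stat
  rw [cnt_congr (imgB_cons_mem hv), cnt_congr (cmpB_cons_mem hv)]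

lemma cnt_cons_not_mem {x : Fin k → Fin 16} {v} (hv : imgB x v = false) :
    cnt (imgB (Fin.cons v x)) = cnt (imgB x) + 1 := by
  rw [cnt_congr (fun u => imgB_cons (x := x) (v := v) (u := u)),
    ← cnt_eq_card, ← cnt_eq_card]
  have : (univ.filter fun u => ((u == v) || imgB x u) = true)
      = insert v (univ.filter fun u => imgB x u = true) := by
    ext u
    simp only [Finset.mem_filter, Finset.mem_insert, Bool.or_eq_true, beq_iff_eq,
      Finset.mem_univ, true_and]
  rw [this, Finset.card_insert_of_notMem (by simp [hv])]

/-- image is contained in compat set for independent tuples -/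
lemma img_subset_cmp {x : Fin k → Fin 16} (hx : indep x) :
    ∀ v, imgB x v = true → cmpB x v = true := by
  intro v hv
  rw [cmpB_iff]
  rintro s hs
  obtain ⟨i, rfl⟩ := imgB_iff.mp hs
  obtain ⟨j, rfl⟩ := imgB_iff.mp hv
  exact hx i j

/-- for independent tuples whose image and compat sets have the same size,
compat = image -/
lemma cmp_eq_img {x : Fin k → Fin 16} (hx : indep x)
    (h : cnt (cmpB x) = cnt (imgB x)) : ∀ v, cmpB x v = imgB x v := by
  have hsub : (univ.filter fun v => imgB x v = true) ⊆ univ.filter fun v => cmpB x v = true := by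
    intro v hv
    simp only [Finset.mem_filter, Finset.mem_univ, true_and] at *
    exact img_subset_cmp hx v hv
  have hcard : (univ.filter fun v => cmpB x v = true).card ≤
      (univ.filter fun v => imgB x v = true).card := by
    rw [cnt_eq_card, cnt_eq_card, h]
  have := Finset.eq_of_subset_of_card_le hsub hcard
  intro v
  apply bool_ext
  constructor
  · intro hv
    have : v ∈ univ.filter fun v => imgB x v = true := by
      rw [this]; simp [hv]
    simpa using this
  · exact img_subset_cmp hx v

lemma cnt_le_cnt {p q : Fin 16 → Bool} (h : ∀ u, p u = true → q u = true) : cnt p ≤ cnt q := by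
  rw [← cnt_eq_card, ← cnt_eq_card]
  apply Finset.card_le_card
  intro v hv
  simp only [Finset.mem_filter, Finset.mem_univ, true_and] at *
  exact h v hv

lemma ext1 {x : Fin k → Fin 16} (h : cnt (imgB x) = 1) :
    ∃ a, ∀ u, imgB x u = true ↔ u = a := by
  rw [← cnt_eq_card] at h
  obtain ⟨a, ha⟩ := Finset.card_eq_one.mp h
  refine ⟨a, fun u => ?_⟩
  constructor
  · intro hu
    have : u ∈ univ.filter fun v => imgB x v = true := by simp [hu]
    rw [ha] at this; simpa using this
  · rintro rfl
    have : u ∈ univ.filter fun v => imgB x v = true := by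
      rw [ha]; exact Finset.mem_singleton_self u
    simpa using this

lemma ext2 {x : Fin k → Fin 16} (h : cnt (imgB x) = 2) :
    ∃ a b, a ≠ b ∧ ∀ u, imgB x u = true ↔ (u = a ∨ u = b) := by
  rw [← cnt_eq_card] at h
  obtain ⟨a, b, hab, hS⟩ := Finset.card_eq_two.mp h
  refine ⟨a, b, hab, fun u => ?_⟩
  have : imgB x u = true ↔ u ∈ univ.filter fun v => imgB x v = true := by simp
  rw [this, hS]; simp

lemma ext3 {x : Fin k → Fin 16} (h : cnt (imgB x) = 3) :
    ∃ a b c, a ≠ b ∧ a ≠ c ∧ b ≠ c ∧ ∀ u, imgB x u = true ↔ (u = a ∨ u = b ∨ u = c) := by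
  rw [← cnt_eq_card] at h
  obtain ⟨a, b, c, hab, hac, hbc, hS⟩ := Finset.card_eq_three.mp h
  refine ⟨a, b, c, hab, hac, hbc, fun u => ?_⟩
  have : imgB x u = true ↔ u ∈ univ.filter fun v => imgB x v = true := by simp
  rw [this, hS]; simp

lemma img_nonadj {x : Fin k → Fin 16} (hx : indep x) {a b : Fin 16}
    (ha : imgB x a = true) (hb : imgB x b = true) : adj a b = false := by
  obtain ⟨i, rfl⟩ := imgB_iff.mp ha
  obtain ⟨j, rfl⟩ := imgB_iff.mp hb
  exact hx i j

lemma card_in {x : Fin k → Fin 16} (hx : indep x) :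
    (univ.filter fun v => cmpB x v = true ∧ imgB x v = true).card = cnt (imgB x) := by
  rw [← cnt_eq_card (imgB x)]
  congr 1
  apply Finset.filter_congr
  intro v _
  exact ⟨fun h => h.2, fun h => ⟨img_subset_cmp hx v h, h⟩⟩

lemma card_out {x : Fin k → Fin 16} (hx : indep x) :
    (univ.filter fun v => cmpB x v = true ∧ imgB x v = false).card + cnt (imgB x)
      = cnt (cmpB x) := by
  have h := Finset.card_filter_add_card_filter_not
    (s := univ.filter fun v => cmpB x v = true) (p := fun v => imgB x v = true)
  rw [Finset.filter_filter, Finset.filter_filter] at h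
  rw [← cnt_eq_card (cmpB x), ← h, ← card_in hx (x := x)]
  have : ∀ v : Fin 16, (cmpB x v = true ∧ imgB x v = false) ↔
      (cmpB x v = true ∧ ¬ imgB x v = true) := by
    intro v; simp
  rw [Finset.filter_congr (fun v _ => this v)]
  omega

def c1 (a v : Fin 16) : Bool := !adj a v
def c2 (a b v : Fin 16) : Bool := !adj a v && !adj b v
def c3 (a b c v : Fin 16) : Bool := c2 a b v && !adj c v
def c4 (a b c d v : Fin 16) : Bool := c3 a b c v && !adj d v

lemma Feq : ∀ a : Fin 16, cnt (fun v => v == a) = 1 := by decide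
lemma F1 : ∀ a : Fin 16, cnt (c1 a) = 11 := by decide
lemma F2 : ∀ a b : Fin 16, a ≠ b → adj a b = false → cnt (c2 a b) = 8 := by decide
lemma F3 : ∀ a b c : Fin 16, a ≠ b → a ≠ c → b ≠ c → adj a b = false → adj a c = false →
    adj b c = false → cnt (c3 a b c) = 6 := by decide
lemma F4 : ∀ a b c : Fin 16, a ≠ b → a ≠ c → b ≠ c → adj a b = false → adj a c = false →
    adj b c = false →
    cnt (fun v => c3 a b c v && !(v == a || v == b || v == c) && (cnt (c4 a b c v) == 4)) = 1 ∧
    cnt (fun v => c3 a b c v && !(v == a || v == b || v == c) && (cnt (c4 a b c v) == 5)) = 2 := by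
  decide

lemma hc1 {x : Fin k → Fin 16} {a : Fin 16} (himg : ∀ u, imgB x u = true ↔ u = a) :
    ∀ u, cmpB x u = c1 a u := by
  intro u
  apply bool_ext
  rw [cmpB_iff]
  simp only [c1, Bool.not_eq_true']
  constructor
  · intro h; exact h a ((himg a).mpr rfl)
  · intro h s hs; rw [(himg s).mp hs]; exact h

lemma hc2 {x : Fin k → Fin 16} {a b : Fin 16} (himg : ∀ u, imgB x u = true ↔ u = a ∨ u = b) :
    ∀ u, cmpB x u = c2 a b u := by
  intro u
  apply bool_ext
  rw [cmpB_iff]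
  simp only [c2, Bool.and_eq_true, Bool.not_eq_true']
  constructor
  · intro h; exact ⟨h a ((himg a).mpr (Or.inl rfl)), h b ((himg b).mpr (Or.inr rfl))⟩
  · rintro ⟨h1, h2⟩ s hs
    rcases (himg s).mp hs with rfl | rfl
    exacts [h1, h2]

lemma hc3 {x : Fin k → Fin 16} {a b c : Fin 16}
    (himg : ∀ u, imgB x u = true ↔ u = a ∨ u = b ∨ u = c) :
    ∀ u, cmpB x u = c3 a b c u := by
  intro u
  apply bool_ext
  rw [cmpB_iff]
  simp only [c3, c2, Bool.and_eq_true, Bool.not_eq_true']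
  constructor
  · intro h
    exact ⟨⟨h a ((himg a).mpr (Or.inl rfl)), h b ((himg b).mpr (Or.inr (Or.inl rfl)))⟩,
      h c ((himg c).mpr (Or.inr (Or.inr rfl)))⟩
  · rintro ⟨⟨h1, h2⟩, h3⟩ s hs
    rcases (himg s).mp hs with rfl | rfl | rfl
    exacts [h1, h2, h3]

/-- cmp of the extended tuple, when extending by a new vertex from the image `{a,b,c}`. -/
lemma hc4 {x : Fin k → Fin 16} {a b c : Fin 16}
    (himg : ∀ u, imgB x u = true ↔ u = a ∨ u = b ∨ u = c) (v : Fin 16) :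
    ∀ u, cmpB (Fin.cons v x) u = c4 a b c v u := by
  intro u
  rw [cmpB_cons, hc3 himg u, c4, Bool.and_comm]

instance : DecidablePred (indep (k := k)) :=
  fun _ => inferInstanceAs (Decidable (∀ _ _, _))

def E (x : Fin k → Fin 16) (t : ℕ × ℕ) : ℕ :=
  (univ.filter fun v => indep (Fin.cons v x) ∧ stat (Fin.cons v x) = t).card

lemma E_eq {x : Fin k → Fin 16} (hx : indep x) (t : ℕ × ℕ) :
    E x t = (univ.filter fun v => cmpB x v = true ∧ stat (Fin.cons v x) = t).card := by
  unfold E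
  congr 1
  apply Finset.filter_congr
  intro v _
  rw [indep_cons]
  tauto

lemma stat_fst {x : Fin k → Fin 16} {s : ℕ × ℕ} (hs : stat x = s) :
    cnt (imgB x) = s.1 ∧ cnt (cmpB x) = s.2 := by
  rw [← hs]; exact ⟨rfl, rfl⟩

lemma S1 {x : Fin k → Fin 16} (hx : indep x) (hs : stat x = (1, 11)) :
    (∀ v, cmpB x v = true → stat (Fin.cons v x) = (1, 11) ∨ stat (Fin.cons v x) = (2, 8)) ∧
    E x (1, 11) = 1 ∧ E x (2, 8) = 10 ∧ ∀ t, t ≠ (1, 11) → t ≠ (2, 8) → E x t = 0 := by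
  obtain ⟨h1, h2⟩ := stat_fst hs
  obtain ⟨a, himg⟩ := ext1 h1
  have hcmp := hc1 himg
  have hnew : ∀ v, cmpB x v = true → imgB x v = false → stat (Fin.cons v x) = (2, 8) := by
    intro v hv hvi
    have hva : a ≠ v := by
      intro h
      rw [(himg v).mpr h.symm] at hvi; exact absurd hvi (by simp)
    have hadj : adj a v = false := by
      have hcv := (hcmp v).symm.trans hv
      simpa [c1, Bool.not_eq_true'] using hcv
    have hfst : cnt (imgB (Fin.cons v x)) = 2 := by rw [cnt_cons_not_mem hvi, h1]
    have hsnd : cnt (cmpB (Fin.cons v x)) = 8 := by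
      have : ∀ u, cmpB (Fin.cons v x) u = c2 a v u := by
        intro u
        rw [cmpB_cons, hcmp u, c2, c1, Bool.and_comm]
      rw [cnt_congr this]
      exact F2 a v hva hadj
    rw [stat, hfst, hsnd]
  have hcl : ∀ v, cmpB x v = true →
      stat (Fin.cons v x) = (1, 11) ∨ stat (Fin.cons v x) = (2, 8) := by
    intro v hv
    by_cases hvi : imgB x v = true
    · exact Or.inl ((stat_cons_mem hvi).trans hs)
    · exact Or.inr (hnew v hv (by simpa using hvi))
  simp only at h1 h2
  refine ⟨hcl, ?_, ?_, ?_⟩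
  · have hset : (univ.filter fun v => cmpB x v = true ∧ stat (Fin.cons v x) = (1, 11))
        = univ.filter fun v => cmpB x v = true ∧ imgB x v = true := by
      apply Finset.filter_congr
      intro v _
      constructor
      · rintro ⟨hv, hstat⟩
        refine ⟨hv, ?_⟩
        by_contra hvi
        rw [hnew v hv (by simpa using hvi)] at hstat
        exact absurd hstat (by simp)
      · rintro ⟨hv, hvi⟩
        exact ⟨hv, (stat_cons_mem hvi).trans hs⟩
    rw [E_eq hx, hset, card_in hx, h1]
  · have hco := card_out hx (x := x)
    rw [E_eq hx]
    have : (univ.filter fun v => cmpB x v = true ∧ stat (Fin.cons v x) = (2, 8))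
        = univ.filter fun v => cmpB x v = true ∧ imgB x v = false := by
      apply Finset.filter_congr
      intro v _
      constructor
      · rintro ⟨hv, hstat⟩
        refine ⟨hv, ?_⟩
        by_contra hvi
        rw [(stat_cons_mem (by simpa using hvi)).trans hs] at hstat
        exact absurd hstat (by simp)
      · rintro ⟨hv, hvi⟩
        exact ⟨hv, hnew v hv hvi⟩
    rw [this]
    omega
  · intro t ht1 ht2
    rw [E_eq hx]
    rw [Finset.card_eq_zero, Finset.filter_eq_empty_iff]
    rintro v - ⟨hv, hstat⟩
    rcases hcl v hv with h | h
    · exact ht1 (hstat ▸ h ▸ rfl)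
    · exact ht2 (hstat ▸ h ▸ rfl)

lemma S2 {x : Fin k → Fin 16} (hx : indep x) (hs : stat x = (2, 8)) :
    (∀ v, cmpB x v = true → stat (Fin.cons v x) = (2, 8) ∨ stat (Fin.cons v x) = (3, 6)) ∧
    E x (2, 8) = 2 ∧ E x (3, 6) = 6 ∧ ∀ t, t ≠ (2, 8) → t ≠ (3, 6) → E x t = 0 := by
  obtain ⟨h1, h2⟩ := stat_fst hs
  simp only at h1 h2
  obtain ⟨a, b, hab, himg⟩ := ext2 h1
  have hcmp := hc2 himg
  have ha : imgB x a = true := (himg a).mpr (Or.inl rfl)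
  have hb : imgB x b = true := (himg b).mpr (Or.inr rfl)
  have hadj_ab : adj a b = false := img_nonadj hx ha hb
  have hnew : ∀ v, cmpB x v = true → imgB x v = false → stat (Fin.cons v x) = (3, 6) := by
    intro v hv hvi
    have hmem : ¬(v = a ∨ v = b) := fun h => by
      rw [(himg v).mpr h] at hvi; exact absurd hvi (by simp)
    have hcv := (hcmp v).symm.trans hv
    simp only [c2, Bool.and_eq_true, Bool.not_eq_true'] at hcv
    have hfst : cnt (imgB (Fin.cons v x)) = 3 := by rw [cnt_cons_not_mem hvi, h1]
    have hsnd : cnt (cmpB (Fin.cons v x)) = 6 := by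
      have heq : ∀ u, cmpB (Fin.cons v x) u = c3 a b v u := by
        intro u
        rw [cmpB_cons, hcmp u, c3, Bool.and_comm]
      rw [cnt_congr heq]
      exact F3 a b v hab (fun h => hmem (Or.inl h.symm)) (fun h => hmem (Or.inr h.symm))
        hadj_ab hcv.1 hcv.2
    rw [stat, hfst, hsnd]
  have hcl : ∀ v, cmpB x v = true →
      stat (Fin.cons v x) = (2, 8) ∨ stat (Fin.cons v x) = (3, 6) := by
    intro v hv
    by_cases hvi : imgB x v = true
    · exact Or.inl ((stat_cons_mem hvi).trans hs)
    · exact Or.inr (hnew v hv (by simpa using hvi))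
  refine ⟨hcl, ?_, ?_, ?_⟩
  · have hset : (univ.filter fun v => cmpB x v = true ∧ stat (Fin.cons v x) = (2, 8))
        = univ.filter fun v => cmpB x v = true ∧ imgB x v = true := by
      apply Finset.filter_congr
      intro v _
      constructor
      · rintro ⟨hv, hstat⟩
        refine ⟨hv, ?_⟩
        by_contra hvi
        rw [hnew v hv (by simpa using hvi)] at hstat
        exact absurd hstat (by simp)
      · rintro ⟨hv, hvi⟩
        exact ⟨hv, (stat_cons_mem hvi).trans hs⟩
    rw [E_eq hx, hset, card_in hx, h1]
  · have hco := card_out hx (x := x)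
    have hset : (univ.filter fun v => cmpB x v = true ∧ stat (Fin.cons v x) = (3, 6))
        = univ.filter fun v => cmpB x v = true ∧ imgB x v = false := by
      apply Finset.filter_congr
      intro v _
      constructor
      · rintro ⟨hv, hstat⟩
        refine ⟨hv, ?_⟩
        by_contra hvi
        rw [(stat_cons_mem (by simpa using hvi)).trans hs] at hstat
        exact absurd hstat (by simp)
      · rintro ⟨hv, hvi⟩
        exact ⟨hv, hnew v hv hvi⟩
    rw [E_eq hx, hset]
    omega
  · intro t ht1 ht2
    rw [E_eq hx, Finset.card_eq_zero, Finset.filter_eq_empty_iff]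
    rintro v - ⟨hv, hstat⟩
    rcases hcl v hv with h | h
    · exact ht1 (hstat ▸ h ▸ rfl)
    · exact ht2 (hstat ▸ h ▸ rfl)

lemma S44 {x : Fin k → Fin 16} (hx : indep x) (hs : stat x = (4, 4)) :
    (∀ v, cmpB x v = true → stat (Fin.cons v x) = (4, 4)) ∧
    E x (4, 4) = 4 ∧ ∀ t, t ≠ (4, 4) → E x t = 0 := by
  obtain ⟨h1, h2⟩ := stat_fst hs
  simp only at h1 h2
  have hci := cmp_eq_img hx (h2.trans h1.symm)
  have hcl : ∀ v, cmpB x v = true → stat (Fin.cons v x) = (4, 4) := by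
    intro v hv
    exact (stat_cons_mem ((hci v).symm.trans hv)).trans hs
  refine ⟨hcl, ?_, ?_⟩
  · have hset : (univ.filter fun v => cmpB x v = true ∧ stat (Fin.cons v x) = (4, 4))
        = univ.filter fun v => cmpB x v = true ∧ imgB x v = true := by
      apply Finset.filter_congr
      intro v _
      exact ⟨fun h => ⟨h.1, (hci v).symm.trans h.1⟩, fun h => ⟨h.1, hcl v h.1⟩⟩
    rw [E_eq hx, hset, card_in hx, h1]
  · intro t ht
    rw [E_eq hx, Finset.card_eq_zero, Finset.filter_eq_empty_iff]
    rintro v - ⟨hv, hstat⟩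
    exact ht (hstat ▸ (hcl v hv) ▸ rfl)

lemma S55 {x : Fin k → Fin 16} (hx : indep x) (hs : stat x = (5, 5)) :
    (∀ v, cmpB x v = true → stat (Fin.cons v x) = (5, 5)) ∧
    E x (5, 5) = 5 ∧ ∀ t, t ≠ (5, 5) → E x t = 0 := by
  obtain ⟨h1, h2⟩ := stat_fst hs
  simp only at h1 h2
  have hci := cmp_eq_img hx (h2.trans h1.symm)
  have hcl : ∀ v, cmpB x v = true → stat (Fin.cons v x) = (5, 5) := by
    intro v hv
    exact (stat_cons_mem ((hci v).symm.trans hv)).trans hs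
  refine ⟨hcl, ?_, ?_⟩
  · have hset : (univ.filter fun v => cmpB x v = true ∧ stat (Fin.cons v x) = (5, 5))
        = univ.filter fun v => cmpB x v = true ∧ imgB x v = true := by
      apply Finset.filter_congr
      intro v _
      exact ⟨fun h => ⟨h.1, (hci v).symm.trans h.1⟩, fun h => ⟨h.1, hcl v h.1⟩⟩
    rw [E_eq hx, hset, card_in hx, h1]
  · intro t ht
    rw [E_eq hx, Finset.card_eq_zero, Finset.filter_eq_empty_iff]
    rintro v - ⟨hv, hstat⟩
    exact ht (hstat ▸ (hcl v hv) ▸ rfl)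

lemma S45 {x : Fin k → Fin 16} (hx : indep x) (hs : stat x = (4, 5)) :
    (∀ v, cmpB x v = true → stat (Fin.cons v x) = (4, 5) ∨ stat (Fin.cons v x) = (5, 5)) ∧
    E x (4, 5) = 4 ∧ E x (5, 5) = 1 ∧ ∀ t, t ≠ (4, 5) → t ≠ (5, 5) → E x t = 0 := by
  obtain ⟨h1, h2⟩ := stat_fst hs
  simp only at h1 h2
  have hnew : ∀ v, cmpB x v = true → imgB x v = false → stat (Fin.cons v x) = (5, 5) := by
    intro v hv hvi
    have hfst : cnt (imgB (Fin.cons v x)) = 5 := by rw [cnt_cons_not_mem hvi, h1]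
    have hy : indep (Fin.cons v x) := indep_cons.mpr ⟨hx, hv⟩
    have hlow : 5 ≤ cnt (cmpB (Fin.cons v x)) :=
      hfst ▸ cnt_le_cnt (img_subset_cmp hy)
    have hup : cnt (cmpB (Fin.cons v x)) ≤ 5 := by
      rw [← h2]
      refine cnt_le_cnt fun u hu => ?_
      rw [cmpB_cons] at hu
      exact (Bool.and_eq_true _ _ |>.mp hu).2
    rw [stat, hfst]
    exact Prod.ext rfl (by omega)
  have hcl : ∀ v, cmpB x v = true →
      stat (Fin.cons v x) = (4, 5) ∨ stat (Fin.cons v x) = (5, 5) := by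
    intro v hv
    by_cases hvi : imgB x v = true
    · exact Or.inl ((stat_cons_mem hvi).trans hs)
    · exact Or.inr (hnew v hv (by simpa using hvi))
  refine ⟨hcl, ?_, ?_, ?_⟩
  · have hset : (univ.filter fun v => cmpB x v = true ∧ stat (Fin.cons v x) = (4, 5))
        = univ.filter fun v => cmpB x v = true ∧ imgB x v = true := by
      apply Finset.filter_congr
      intro v _
      constructor
      · rintro ⟨hv, hstat⟩
        refine ⟨hv, ?_⟩
        by_contra hvi
        rw [hnew v hv (by simpa using hvi)] at hstat
        exact absurd hstat (by simp)
      · rintro ⟨hv, hvi⟩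
        exact ⟨hv, (stat_cons_mem hvi).trans hs⟩
    rw [E_eq hx, hset, card_in hx, h1]
  · have hco := card_out hx (x := x)
    have hset : (univ.filter fun v => cmpB x v = true ∧ stat (Fin.cons v x) = (5, 5))
        = univ.filter fun v => cmpB x v = true ∧ imgB x v = false := by
      apply Finset.filter_congr
      intro v _
      constructor
      · rintro ⟨hv, hstat⟩
        refine ⟨hv, ?_⟩
        by_contra hvi
        rw [(stat_cons_mem (by simpa using hvi)).trans hs] at hstat
        exact absurd hstat (by simp)
      · rintro ⟨hv, hvi⟩
        exact ⟨hv, hnew v hv hvi⟩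
    rw [E_eq hx, hset]
    omega
  · intro t ht1 ht2
    rw [E_eq hx, Finset.card_eq_zero, Finset.filter_eq_empty_iff]
    rintro v - ⟨hv, hstat⟩
    rcases hcl v hv with h | h
    · exact ht1 (hstat ▸ h ▸ rfl)
    · exact ht2 (hstat ▸ h ▸ rfl)

lemma S3 {x : Fin k → Fin 16} (hx : indep x) (hs : stat x = (3, 6)) :
    (∀ v, cmpB x v = true → stat (Fin.cons v x) = (3, 6) ∨ stat (Fin.cons v x) = (4, 4) ∨
      stat (Fin.cons v x) = (4, 5)) ∧
    E x (3, 6) = 3 ∧ E x (4, 4) = 1 ∧ E x (4, 5) = 2 ∧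
    ∀ t, t ≠ (3, 6) → t ≠ (4, 4) → t ≠ (4, 5) → E x t = 0 := by
  obtain ⟨h1, h2⟩ := stat_fst hs
  simp only at h1 h2
  obtain ⟨a, b, c, hab, hac, hbc, himg⟩ := ext3 h1
  have hcmp := hc3 himg
  have ha : imgB x a = true := (himg a).mpr (Or.inl rfl)
  have hb : imgB x b = true := (himg b).mpr (Or.inr (Or.inl rfl))
  have hc : imgB x c = true := (himg c).mpr (Or.inr (Or.inr rfl))
  have hF4 := F4 a b c hab hac hbc (img_nonadj hx ha hb) (img_nonadj hx ha hc)
    (img_nonadj hx hb hc)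
  -- characterization of the two extension classes
  have hiff : ∀ n : ℕ, ∀ v,
      ((cmpB x v = true ∧ imgB x v = false ∧ cnt (c4 a b c v) = n) ↔
        (c3 a b c v && !(v == a || v == b || v == c) && (cnt (c4 a b c v) == n)) = true) := by
    intro n v
    simp only [Bool.and_eq_true, Bool.not_eq_true', Bool.or_eq_false_iff, beq_iff_eq,
      beq_eq_false_iff_ne, ne_eq]
    constructor
    · rintro ⟨hv, hvi, hn⟩
      have h3 : c3 a b c v = true := (hcmp v).symm.trans hv
      have hmem : ¬(v = a ∨ v = b ∨ v = c) := by
        intro h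
        rw [(himg v).mpr h] at hvi
        exact absurd hvi (by simp)
      tauto
    · intro hall
      have h3 : c3 a b c v = true := by tauto
      have hna : ¬ v = a := by tauto
      have hnb : ¬ v = b := by tauto
      have hnc : ¬ v = c := by tauto
      have hn : cnt (c4 a b c v) = n := by tauto
      refine ⟨(hcmp v).trans h3, ?_, hn⟩
      by_contra hvi
      rcases (himg v).mp (by simpa using hvi) with rfl | rfl | rfl
      · exact hna rfl
      · exact hnb rfl
      · exact hnc rfl
  have hnew : ∀ v, cmpB x v = true → imgB x v = false →
      stat (Fin.cons v x) = (4, cnt (c4 a b c v)) := by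
    intro v hv hvi
    have hfst : cnt (imgB (Fin.cons v x)) = 4 := by rw [cnt_cons_not_mem hvi, h1]
    rw [stat, hfst, cnt_congr (hc4 himg v)]
  -- the three extension vertices split as 1 (to (4,4)) + 2 (to (4,5))
  have hX : ∀ v, cmpB x v = true → imgB x v = false →
      cnt (c4 a b c v) = 4 ∨ cnt (c4 a b c v) = 5 := by
    have hco := card_out hx (x := x)
    set X := univ.filter fun v => cmpB x v = true ∧ imgB x v = false with hXdef
    set X4 := univ.filter fun v =>
      (c3 a b c v && !(v == a || v == b || v == c) && (cnt (c4 a b c v) == 4)) = true with hX4def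
    set X5 := univ.filter fun v =>
      (c3 a b c v && !(v == a || v == b || v == c) && (cnt (c4 a b c v) == 5)) = true with hX5def
    have hcard4 : X4.card = 1 := by rw [hX4def, cnt_eq_card]; exact hF4.1
    have hcard5 : X5.card = 2 := by rw [hX5def, cnt_eq_card]; exact hF4.2
    have hcardX : X.card = 3 := by omega
    have hsub : X4 ∪ X5 ⊆ X := by
      intro v hv
      simp only [Finset.mem_union, hX4def, hX5def, Finset.mem_filter, Finset.mem_univ,
        true_and] at hv
      simp only [hXdef, Finset.mem_filter, Finset.mem_univ, true_and]
      rcases hv with hv | hv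
      · have := (hiff 4 v).mpr hv; exact ⟨this.1, this.2.1⟩
      · have := (hiff 5 v).mpr hv; exact ⟨this.1, this.2.1⟩
    have hdisj : Disjoint X4 X5 := by
      rw [Finset.disjoint_left]
      intro v hv4 hv5
      simp only [hX4def, hX5def, Finset.mem_filter, Finset.mem_univ, true_and] at hv4 hv5
      have h4 := (hiff 4 v).mpr hv4
      have h5 := (hiff 5 v).mpr hv5
      omega
    have hXeq : X4 ∪ X5 = X := by
      apply Finset.eq_of_subset_of_card_le hsub
      rw [Finset.card_union_of_disjoint hdisj]
      omega
    intro v hv hvi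
    have : v ∈ X4 ∪ X5 := by
      rw [hXeq, hXdef]
      simp only [Finset.mem_filter, Finset.mem_univ, true_and]
      exact ⟨hv, hvi⟩
    simp only [Finset.mem_union, hX4def, hX5def, Finset.mem_filter, Finset.mem_univ,
      true_and] at this
    rcases this with h | h
    · exact Or.inl ((hiff 4 v).mpr h).2.2
    · exact Or.inr ((hiff 5 v).mpr h).2.2
  have hcl : ∀ v, cmpB x v = true → stat (Fin.cons v x) = (3, 6) ∨
      stat (Fin.cons v x) = (4, 4) ∨ stat (Fin.cons v x) = (4, 5) := by
    intro v hv
    by_cases hvi : imgB x v = true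
    · exact Or.inl ((stat_cons_mem hvi).trans hs)
    · have hvi' : imgB x v = false := by simpa using hvi
      rcases hX v hv hvi' with h | h
      · exact Or.inr (Or.inl (by rw [hnew v hv hvi', h]))
      · exact Or.inr (Or.inr (by rw [hnew v hv hvi', h]))
  refine ⟨hcl, ?_, ?_, ?_, ?_⟩
  · have hset : (univ.filter fun v => cmpB x v = true ∧ stat (Fin.cons v x) = (3, 6))
        = univ.filter fun v => cmpB x v = true ∧ imgB x v = true := by
      apply Finset.filter_congr
      intro v _
      constructor
      · rintro ⟨hv, hstat⟩
        refine ⟨hv, ?_⟩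
        by_contra hvi
        rw [hnew v hv (by simpa using hvi)] at hstat
        exact absurd hstat (by simp)
      · rintro ⟨hv, hvi⟩
        exact ⟨hv, (stat_cons_mem hvi).trans hs⟩
    rw [E_eq hx, hset, card_in hx, h1]
  · have hset : (univ.filter fun v => cmpB x v = true ∧ stat (Fin.cons v x) = (4, 4))
        = univ.filter fun v =>
          (c3 a b c v && !(v == a || v == b || v == c) && (cnt (c4 a b c v) == 4)) = true := by
      apply Finset.filter_congr
      intro v _
      constructor
      · rintro ⟨hv, hstat⟩
        have hvi : imgB x v = false := by
          by_contra hvi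
          rw [(stat_cons_mem (by simpa using hvi)).trans hs] at hstat
          exact absurd hstat (by simp)
        rw [hnew v hv hvi] at hstat
        exact (hiff 4 v).mp ⟨hv, hvi, by simpa using hstat⟩
      · intro hp
        obtain ⟨hv, hvi, hn⟩ := (hiff 4 v).mpr hp
        exact ⟨hv, by rw [hnew v hv hvi, hn]⟩
    rw [E_eq hx, hset, cnt_eq_card]
    exact hF4.1
  · have hset : (univ.filter fun v => cmpB x v = true ∧ stat (Fin.cons v x) = (4, 5))
        = univ.filter fun v =>
          (c3 a b c v && !(v == a || v == b || v == c) && (cnt (c4 a b c v) == 5)) = true := by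
      apply Finset.filter_congr
      intro v _
      constructor
      · rintro ⟨hv, hstat⟩
        have hvi : imgB x v = false := by
          by_contra hvi
          rw [(stat_cons_mem (by simpa using hvi)).trans hs] at hstat
          exact absurd hstat (by simp)
        rw [hnew v hv hvi] at hstat
        exact (hiff 5 v).mp ⟨hv, hvi, by simpa using hstat⟩
      · intro hp
        obtain ⟨hv, hvi, hn⟩ := (hiff 5 v).mpr hp
        exact ⟨hv, by rw [hnew v hv hvi, hn]⟩
    rw [E_eq hx, hset, cnt_eq_card]
    exact hF4.2
  · intro t ht1 ht2 ht3
    rw [E_eq hx, Finset.card_eq_zero, Finset.filter_eq_empty_iff]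
    rintro v - ⟨hv, hstat⟩
    rcases hcl v hv with h | h | h
    · exact ht1 (hstat ▸ h ▸ rfl)
    · exact ht2 (hstat ▸ h ▸ rfl)
    · exact ht3 (hstat ▸ h ▸ rfl)

def Ck (k : ℕ) (s : ℕ × ℕ) : ℕ :=
  (univ.filter fun x : Fin k → Fin 16 => indep x ∧ stat x = s).card
def Nk (k : ℕ) : ℕ := (univ.filter fun x : Fin k → Fin 16 => indep x).card

lemma card_step (P : (Fin (k + 1) → Fin 16) → Prop) [DecidablePred P] :
    (univ.filter P).card
      = ∑ x : Fin k → Fin 16, (univ.filter fun v => P (Fin.cons v x)).card := by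
  rw [Finset.card_eq_sum_card_fiberwise (f := Fin.tail) (t := univ)
    (fun x _ => Finset.mem_univ _)]
  apply Finset.sum_congr rfl
  intro x _
  rw [Finset.filter_filter]
  apply Finset.card_nbij' (i := fun y => y 0) (j := fun v => Fin.cons v x)
  · intro y hy
    simp only [Finset.mem_coe, Finset.mem_filter, Finset.mem_univ, true_and] at hy ⊢
    have : Fin.cons (y 0) x = y := by rw [← hy.2, Fin.cons_self_tail]
    rw [this]
    exact hy.1
  · intro v hv
    simp only [Finset.mem_coe, Finset.mem_filter, Finset.mem_univ, true_and] at hv ⊢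
    exact ⟨hv, by simp⟩
  · intro y hy
    simp only [Finset.mem_coe, Finset.mem_filter, Finset.mem_univ, true_and] at hy
    rw [← hy.2]; exact Fin.cons_self_tail y
  · intro v hv
    simp

lemma Ck_step (t : ℕ × ℕ) : Ck (k + 1) t = ∑ x : Fin k → Fin 16, E x t :=
  card_step _

lemma E_zero {x : Fin k → Fin 16} (hx : ¬ indep x) (t : ℕ × ℕ) : E x t = 0 := by
  rw [E, Finset.card_eq_zero, Finset.filter_eq_empty_iff]
  rintro v - ⟨hv, -⟩
  exact hx (indep_cons.mp hv).1

lemma sum_ite_card (p : (Fin k → Fin 16) → Prop) [DecidablePred p] (e : ℕ) :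
    (∑ x : Fin k → Fin 16, if p x then e else 0) = (univ.filter p).card * e := by
  rw [← Finset.sum_filter, Finset.sum_const, smul_eq_mul]

def Cover (k : ℕ) : Prop := ∀ x : Fin k → Fin 16, indep x →
  stat x = (1, 11) ∨ stat x = (2, 8) ∨ stat x = (3, 6) ∨ stat x = (4, 4) ∨
  stat x = (4, 5) ∨ stat x = (5, 5)

lemma sum_E (hcov : Cover k) (t : ℕ × ℕ) (e₁ e₂ e₃ e₄ e₅ e₆ : ℕ)
    (h₁ : ∀ x : Fin k → Fin 16, indep x → stat x = (1, 11) → E x t = e₁)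
    (h₂ : ∀ x : Fin k → Fin 16, indep x → stat x = (2, 8) → E x t = e₂)
    (h₃ : ∀ x : Fin k → Fin 16, indep x → stat x = (3, 6) → E x t = e₃)
    (h₄ : ∀ x : Fin k → Fin 16, indep x → stat x = (4, 4) → E x t = e₄)
    (h₅ : ∀ x : Fin k → Fin 16, indep x → stat x = (4, 5) → E x t = e₅)
    (h₆ : ∀ x : Fin k → Fin 16, indep x → stat x = (5, 5) → E x t = e₆) :
    (∑ x : Fin k → Fin 16, E x t)
      = Ck k (1, 11) * e₁ + Ck k (2, 8) * e₂ + Ck k (3, 6) * e₃ + Ck k (4, 4) * e₄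
        + Ck k (4, 5) * e₅ + Ck k (5, 5) * e₆ := by
  have hpt : ∀ x : Fin k → Fin 16, E x t
      = (if indep x ∧ stat x = (1, 11) then e₁ else 0)
        + (if indep x ∧ stat x = (2, 8) then e₂ else 0)
        + (if indep x ∧ stat x = (3, 6) then e₃ else 0)
        + (if indep x ∧ stat x = (4, 4) then e₄ else 0)
        + (if indep x ∧ stat x = (4, 5) then e₅ else 0)
        + (if indep x ∧ stat x = (5, 5) then e₆ else 0) := by
    intro x
    by_cases hx : indep x
    · rcases hcov x hx with h | h | h | h | h | h <;>
        · first
          | rw [h₁ x hx h] | rw [h₂ x hx h] | rw [h₃ x hx h]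
          | rw [h₄ x hx h] | rw [h₅ x hx h] | rw [h₆ x hx h]
          simp [hx, h, Prod.ext_iff]
    · simp [E_zero hx, hx]
  rw [Finset.sum_congr rfl (fun x _ => hpt x)]
  rw [Finset.sum_add_distrib, Finset.sum_add_distrib, Finset.sum_add_distrib,
    Finset.sum_add_distrib, Finset.sum_add_distrib]
  rw [sum_ite_card, sum_ite_card, sum_ite_card, sum_ite_card, sum_ite_card, sum_ite_card]
  rfl

lemma indep_one (x : Fin 1 → Fin 16) : indep x := by
  intro i j
  rw [Subsingleton.elim i 0, Subsingleton.elim j 0]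
  exact F0 _

lemma stat_one (x : Fin 1 → Fin 16) : stat x = (1, 11) := by
  have himg : ∀ v, imgB x v = (v == x 0) := by
    intro v
    apply bool_ext
    rw [imgB_iff, beq_iff_eq]
    constructor
    · rintro ⟨i, rfl⟩; rw [Subsingleton.elim i 0]
    · rintro rfl; exact ⟨0, rfl⟩
  have hcmp : ∀ v, cmpB x v = c1 (x 0) v := by
    intro v
    apply bool_ext
    rw [cmpB_iff]
    simp only [c1, Bool.not_eq_true']
    constructor
    · intro h; exact h (x 0) ((himg (x 0)).trans (by simp))
    · intro h s hs
      rw [himg s, beq_iff_eq] at hs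
      rw [hs]; exact h
  rw [stat, cnt_congr himg, cnt_congr hcmp, Feq, F1]

lemma cover_one : Cover 1 := fun x _ => Or.inl (stat_one x)

lemma Ck_one_a : Ck 1 (1, 11) = 16 := by
  rw [Ck]
  rw [Finset.filter_true_of_mem (fun x _ => ⟨indep_one x, stat_one x⟩)]
  rw [Finset.card_univ]
  simp

lemma Ck_one_b (s : ℕ × ℕ) (hs : s ≠ (1, 11)) : Ck 1 s = 0 := by
  rw [Ck, Finset.card_eq_zero, Finset.filter_eq_empty_iff]
  rintro x - ⟨-, hstat⟩
  exact hs ((stat_one x) ▸ hstat ▸ rfl)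

lemma cover_succ (hcov : Cover k) : Cover (k + 1) := by
  intro y hy
  have hco : Fin.cons (y 0) (Fin.tail y) = y := Fin.cons_self_tail y
  rw [← hco] at hy
  obtain ⟨hx, hv⟩ := indep_cons.mp hy
  rcases hcov _ hx with h | h | h | h | h | h
  · rcases (S1 hx h).1 _ hv with h' | h' <;> rw [hco] at h' <;> simp [h']
  · rcases (S2 hx h).1 _ hv with h' | h' <;> rw [hco] at h' <;> simp [h']
  · rcases (S3 hx h).1 _ hv with h' | h' | h' <;> rw [hco] at h' <;> simp [h']
  · have h' := (S44 hx h).1 _ hv; rw [hco] at h'; simp [h']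
  · rcases (S45 hx h).1 _ hv with h' | h' <;> rw [hco] at h' <;> simp [h']
  · have h' := (S55 hx h).1 _ hv; rw [hco] at h'; simp [h']

lemma Ck_succ (hcov : Cover k) :
    Ck (k + 1) (1, 11) = Ck k (1, 11) * 1 ∧
    Ck (k + 1) (2, 8) = Ck k (1, 11) * 10 + Ck k (2, 8) * 2 ∧
    Ck (k + 1) (3, 6) = Ck k (2, 8) * 6 + Ck k (3, 6) * 3 ∧
    Ck (k + 1) (4, 4) = Ck k (3, 6) * 1 + Ck k (4, 4) * 4 ∧
    Ck (k + 1) (4, 5) = Ck k (3, 6) * 2 + Ck k (4, 5) * 4 ∧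
    Ck (k + 1) (5, 5) = Ck k (4, 5) * 1 + Ck k (5, 5) * 5 := by
  refine ⟨?_, ?_, ?_, ?_, ?_, ?_⟩
  · rw [Ck_step, sum_E hcov _ 1 0 0 0 0 0
      (fun x hx h => (S1 hx h).2.1)
      (fun x hx h => (S2 hx h).2.2.2 _ (by decide) (by decide))
      (fun x hx h => (S3 hx h).2.2.2.2 _ (by decide) (by decide) (by decide))
      (fun x hx h => (S44 hx h).2.2 _ (by decide))
      (fun x hx h => (S45 hx h).2.2.2 _ (by decide) (by decide))
      (fun x hx h => (S55 hx h).2.2 _ (by decide))]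
    ring
  · rw [Ck_step, sum_E hcov _ 10 2 0 0 0 0
      (fun x hx h => (S1 hx h).2.2.1)
      (fun x hx h => (S2 hx h).2.1)
      (fun x hx h => (S3 hx h).2.2.2.2 _ (by decide) (by decide) (by decide))
      (fun x hx h => (S44 hx h).2.2 _ (by decide))
      (fun x hx h => (S45 hx h).2.2.2 _ (by decide) (by decide))
      (fun x hx h => (S55 hx h).2.2 _ (by decide))]
    ring
  · rw [Ck_step, sum_E hcov _ 0 6 3 0 0 0
      (fun x hx h => (S1 hx h).2.2.2 _ (by decide) (by decide))
      (fun x hx h => (S2 hx h).2.2.1)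
      (fun x hx h => (S3 hx h).2.1)
      (fun x hx h => (S44 hx h).2.2 _ (by decide))
      (fun x hx h => (S45 hx h).2.2.2 _ (by decide) (by decide))
      (fun x hx h => (S55 hx h).2.2 _ (by decide))]
    ring
  · rw [Ck_step, sum_E hcov _ 0 0 1 4 0 0
      (fun x hx h => (S1 hx h).2.2.2 _ (by decide) (by decide))
      (fun x hx h => (S2 hx h).2.2.2 _ (by decide) (by decide))
      (fun x hx h => (S3 hx h).2.2.1)
      (fun x hx h => (S44 hx h).2.1)
      (fun x hx h => (S45 hx h).2.2.2 _ (by decide) (by decide))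
      (fun x hx h => (S55 hx h).2.2 _ (by decide))]
    ring
  · rw [Ck_step, sum_E hcov _ 0 0 2 0 4 0
      (fun x hx h => (S1 hx h).2.2.2 _ (by decide) (by decide))
      (fun x hx h => (S2 hx h).2.2.2 _ (by decide) (by decide))
      (fun x hx h => (S3 hx h).2.2.2.1)
      (fun x hx h => (S44 hx h).2.2 _ (by decide))
      (fun x hx h => (S45 hx h).2.1)
      (fun x hx h => (S55 hx h).2.2 _ (by decide))]
    ring
  · rw [Ck_step, sum_E hcov _ 0 0 0 0 1 5
      (fun x hx h => (S1 hx h).2.2.2 _ (by decide) (by decide))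
      (fun x hx h => (S2 hx h).2.2.2 _ (by decide) (by decide))
      (fun x hx h => (S3 hx h).2.2.2.2 _ (by decide) (by decide) (by decide))
      (fun x hx h => (S44 hx h).2.2 _ (by decide))
      (fun x hx h => (S45 hx h).2.2.1)
      (fun x hx h => (S55 hx h).2.1)]
    ring

lemma main_formulas : ∀ m : ℕ, Cover (m + 1) ∧
    ((Ck (m + 1) (1, 11) : ℚ) = 16 ∧
     (Ck (m + 1) (2, 8) : ℚ) = 160 * 2 ^ m - 160 ∧
     (Ck (m + 1) (3, 6) : ℚ) = 480 * 3 ^ m - 960 * 2 ^ m + 480 ∧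
     (Ck (m + 1) (4, 4) : ℚ) = 160 * 4 ^ m - 480 * 3 ^ m + 480 * 2 ^ m - 160 ∧
     (Ck (m + 1) (4, 5) : ℚ) = 320 * 4 ^ m - 960 * 3 ^ m + 960 * 2 ^ m - 320 ∧
     (Ck (m + 1) (5, 5) : ℚ) = 80 * 5 ^ m - 320 * 4 ^ m + 480 * 3 ^ m - 320 * 2 ^ m + 80) := by
  intro m
  induction m with
  | zero =>
    refine ⟨cover_one, by simp [Ck_one_a], ?_, ?_, ?_, ?_, ?_⟩ <;>
      · rw [Ck_one_b _ (by decide)]; norm_num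
  | succ n ih =>
    obtain ⟨hcov, h1, h2, h3, h4, h5, h6⟩ := ih
    obtain ⟨s1, s2, s3, s4, s5, s6⟩ := Ck_succ hcov
    refine ⟨cover_succ hcov, ?_, ?_, ?_, ?_, ?_, ?_⟩
    · rw [s1]; push_cast; rw [h1]; ring
    · rw [s2]; push_cast; rw [h1, h2]; ring
    · rw [s3]; push_cast; rw [h2, h3]; ring
    · rw [s4]; push_cast; rw [h3, h4]; ring
    · rw [s5]; push_cast; rw [h3, h5]; ring
    · rw [s6]; push_cast; rw [h5, h6]; ring

lemma Nk_eq (hcov : Cover k) :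
    Nk k = Ck k (1, 11) + Ck k (2, 8) + Ck k (3, 6) + Ck k (4, 4) + Ck k (4, 5)
      + Ck k (5, 5) := by
  have hpt : ∀ x : Fin k → Fin 16, (if indep x then (1 : ℕ) else 0)
      = (if indep x ∧ stat x = (1, 11) then 1 else 0)
        + (if indep x ∧ stat x = (2, 8) then 1 else 0)
        + (if indep x ∧ stat x = (3, 6) then 1 else 0)
        + (if indep x ∧ stat x = (4, 4) then 1 else 0)
        + (if indep x ∧ stat x = (4, 5) then 1 else 0)
        + (if indep x ∧ stat x = (5, 5) then 1 else 0) := by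
    intro x
    by_cases hx : indep x
    · rcases hcov x hx with h | h | h | h | h | h <;> simp [hx, h, Prod.ext_iff]
    · simp [hx]
  have : Nk k = ∑ x : Fin k → Fin 16, if indep x then (1 : ℕ) else 0 := by
    rw [Nk, Finset.card_filter]
  rw [this, Finset.sum_congr rfl (fun x _ => hpt x)]
  rw [Finset.sum_add_distrib, Finset.sum_add_distrib, Finset.sum_add_distrib,
    Finset.sum_add_distrib, Finset.sum_add_distrib]
  rw [Ck, Ck, Ck, Ck, Ck, Ck, Finset.card_filter, Finset.card_filter, Finset.card_filter,
    Finset.card_filter, Finset.card_filter, Finset.card_filter]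

lemma Nk_formula (m : ℕ) :
    (Nk (m + 1) : ℚ) = 80 * 5 ^ m + 160 * 4 ^ m - 480 * 3 ^ m + 320 * 2 ^ m - 64 := by
  obtain ⟨hcov, h1, h2, h3, h4, h5, h6⟩ := main_formulas m
  rw [Nk_eq hcov]
  push_cast
  rw [h1, h2, h3, h4, h5, h6]
  ring

def bit (n i : Nat) : ZMod 2 := if Nat.testBit n i then 1 else 0

def enc (n : Fin 16) : ClebschVert :=
  ⟨![bit n 0, bit n 1, bit n 2, bit n 3, bit n 0 + bit n 1 + bit n 2 + bit n 3],
   by fin_cases n <;> decide⟩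

lemma enc_inj : Function.Injective enc := by decide

lemma card_CV : Fintype.card ClebschVert = 16 := by decide

lemma enc_bij : Function.Bijective enc :=
  (Fintype.bijective_iff_injective_and_card enc).mpr ⟨enc_inj, by simp [card_CV]⟩

noncomputable def e : Fin 16 ≃ ClebschVert := Equiv.ofBijective enc enc_bij

lemma e_apply (a : Fin 16) : e a = enc a := rfl

lemma adj_iff : ∀ a b : Fin 16, Clebsch.Adj (enc a) (enc b) ↔ adj a b = true := by decide

lemma count_transfer (k : ℕ) :
    (Finset.univ.filter fun x : Fin k → ClebschVert =>
        ∀ a b : Fin k, ¬ Clebsch.Adj (x a) (x b)).card = Nk k := by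
  classical
  rw [Nk]
  apply Finset.card_nbij' (i := fun x => e.symm ∘ x) (j := fun x => enc ∘ x)
  · intro x hx
    simp only [Finset.mem_coe, Finset.mem_filter, Finset.mem_univ, true_and] at hx ⊢
    intro i j
    rw [← Bool.not_eq_true, ← adj_iff]
    have h1 : enc (e.symm (x i)) = x i := e.apply_symm_apply (x i)
    have h2 : enc (e.symm (x j)) = x j := e.apply_symm_apply (x j)
    rw [Function.comp_apply, Function.comp_apply, h1, h2]
    exact hx i j
  · intro x hx
    simp only [Finset.mem_coe, Finset.mem_filter, Finset.mem_univ, true_and] at hx ⊢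
    intro i j h
    rw [Function.comp_apply, Function.comp_apply, adj_iff] at h
    rw [hx i j] at h
    exact absurd h (by simp)
  · intro x hx
    funext i
    exact e.apply_symm_apply (x i)
  · intro x hx
    funext i
    exact e.symm_apply_apply (x i)

end ClebschAux

/-- If k ≥ 1 vertices are chosen independently and uniformly at random from the 16 vertices of
the Clebsch graph, the probability that they induce no edge equals
(5·5^(k-1) + 10·4^(k-1) − 30·3^(k-1) + 20·2^(k-1) − 4)/16^(k-1). -/
theorem clebsch_no_edge_probability (k : ℕ) (hk : 1 ≤ k) :
    ((Finset.univ.filter fun x : Fin k → ClebschVert =>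
        ∀ a b : Fin k, ¬ Clebsch.Adj (x a) (x b)).card : ℚ) / 16 ^ k =
      (5 * 5 ^ (k - 1) + 10 * 4 ^ (k - 1) - 30 * 3 ^ (k - 1) + 20 * 2 ^ (k - 1) - 4) /
        16 ^ (k - 1) := by
  obtain ⟨m, rfl⟩ : ∃ m, k = m + 1 := ⟨k - 1, (Nat.succ_pred_eq_of_pos hk).symm⟩
  rw [ClebschAux.count_transfer, ClebschAux.Nk_formula]
  simp only [Nat.add_sub_cancel]
  rw [div_eq_div_iff (by positivity) (by positivity)]
  ring
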